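/- Let L ≥ 1, n, m ≥ 1, A_1,…,A_L ∈ ℝ^{n×n}, B_1,…,B_L ∈ ℝ^{n×m}, and let Q ∈ ℝ^{n×n}, R ∈ ℝ^{m×m} be symmetric positive definite. Let q_1,…,q_M ∈ Δ^L, and define Ā, B̄, Σ_l as the stacked matrices Ā = [A_1; …; A_L], B̄ = [B_1; …; B_L] and Σ_l := blockdiag(q_l(1)I_n,…,q_l(L)I_n). Suppose there exist F ∈ ℝ^{m×n} and symmetric positive definite P ∈ ℝ^{n×n} such that for every l ∈ {1,…,M} the matrix Σ_{j=1}^L q_l(j)(A_j + B_j F)ᵀ P (A_j + B_j F) − P + FᵀRF + Q is negative definite. Then, setting G := P^{−1}, Q̄ := P^{−1}, and Y := F P^{−1}, for every l ∈ {1,…,M} the symmetric block matrix [[I_L ⊗ Q̄, 0, 0, −Σ_l^{1/2}(ĀG + B̄Y)], [∗, R^{−1}, 0, −Y], [∗, ∗, I_n, −Q^{1/2}G], [∗, ∗, ∗, −Q̄ + G + Gᵀ]] is positive definite; in particular F = Y G^{−1} and P = Q̄^{−1}. -/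

import Mathlib

open Matrix
open scoped Kronecker
open scoped MatrixOrder

/-- The vertically stacked matrix `Ā = [A_1; …; A_L]`. -/
def stackMat {L n k : ℕ} (A : Fin L → Matrix (Fin n) (Fin k) ℝ) :
    Matrix (Fin L × Fin n) (Fin k) ℝ :=
  Matrix.of fun li j => A li.1 li.2 j

/-- The square root `Σ_l^{1/2}` of the block-diagonal matrix
`Σ_l = blockdiag(q_l(1)I_n, …, q_l(L)I_n)`. -/
noncomputable def sigmaHalf {L : ℕ} (n : ℕ) (ql : Fin L → ℝ) :
    Matrix (Fin L × Fin n) (Fin L × Fin n) ℝ :=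
  Matrix.diagonal fun li => Real.sqrt (ql li.1)

/-- The 4×4 symmetric block matrix of the paper's LMI (13), with blocks of sizes
`Ln, m, n, n`; the lower-left blocks are determined by symmetry. -/
noncomputable def bigLMI {L n m : ℕ}
    (A : Fin L → Matrix (Fin n) (Fin n) ℝ) (B : Fin L → Matrix (Fin n) (Fin m) ℝ)
    (Q : Matrix (Fin n) (Fin n) ℝ) (hQ : Q.PosDef) (R : Matrix (Fin m) (Fin m) ℝ)
    (ql : Fin L → ℝ) (Y : Matrix (Fin m) (Fin n) ℝ)
    (G Qbar : Matrix (Fin n) (Fin n) ℝ) :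
    Matrix (((Fin L × Fin n) ⊕ Fin m) ⊕ (Fin n ⊕ Fin n))
      (((Fin L × Fin n) ⊕ Fin m) ⊕ (Fin n ⊕ Fin n)) ℝ :=
  Matrix.fromBlocks
    (Matrix.fromBlocks ((1 : Matrix (Fin L) (Fin L) ℝ) ⊗ₖ Qbar) 0 0 R⁻¹)
    (Matrix.fromBlocks 0 (-(sigmaHalf n ql * (stackMat A * G + stackMat B * Y)))
      0 (-Y))
    (Matrix.fromBlocks 0 (-(sigmaHalf n ql * (stackMat A * G + stackMat B * Y)))
      0 (-Y))ᵀ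
    (Matrix.fromBlocks 1 (-(CFC.sqrt Q * G))
      (-(CFC.sqrt Q * G))ᵀ (-Qbar + G + Gᵀ))

theorem posDef_conj' {n : Type*} [Fintype n] [DecidableEq n]
    {W : Matrix n n ℝ} (hW : W.PosDef) (X : Matrix n n ℝ) (hX : IsUnit X) :
    (Xᴴ * W * X).PosDef := by
  refine PosDef.of_dotProduct_mulVec_pos (isHermitian_conjTranspose_mul_mul X hW.1) fun x hx => ?_
  have hXx : X *ᵥ x ≠ 0 :=
    ((Matrix.mulVec_injective_iff_isUnit.mpr hX).ne_iff' (by simp)).2 hx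
  simpa only [star_mulVec, dotProduct_mulVec, vecMul_vecMul] using hW.dotProduct_mulVec_pos hXx

theorem posDef_fromBlocks' {m n : Type*} [Fintype m] [DecidableEq m] [Fintype n] [DecidableEq n]
    {A : Matrix m m ℝ} (B : Matrix m n ℝ) (D : Matrix n n ℝ) (hA : A.PosDef) [Invertible A]
    (hS : (D - Bᴴ * A⁻¹ * B).PosDef) : (Matrix.fromBlocks A B Bᴴ D).PosDef := by
  refine PosDef.of_dotProduct_mulVec_pos ((Matrix.IsHermitian.fromBlocks₁₁ B D hA.1).2 hS.1) fun x hx => ?_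
  rw [← Sum.elim_comp_inl_inr x, dotProduct_mulVec,
    Matrix.schur_complement_eq₁₁ B D _ _ hA.1]
  by_cases hy : x ∘ Sum.inr = 0
  · have hxl : x ∘ Sum.inl ≠ 0 := by
      intro h
      apply hx
      rw [← Sum.elim_comp_inl_inr x, h, hy]
      ext (i | i) <;> rfl
    rw [hy]
    have := hA.dotProduct_mulVec_pos hxl
    rw [dotProduct_mulVec] at this
    simpa using this
  · have h1 := hA.posSemidef.dotProduct_mulVec_nonneg (x ∘ Sum.inl + (A⁻¹ * B) *ᵥ (x ∘ Sum.inr))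
    rw [dotProduct_mulVec] at h1
    have h2 := hS.dotProduct_mulVec_pos hy
    rw [dotProduct_mulVec] at h2
    linarith

theorem fromBlocks_sub' {n m : Type*} {R : Type*} [Sub R] (A : Matrix n n R) (B : Matrix n m R)
    (C : Matrix m n R) (D : Matrix m m R) (A' : Matrix n n R) (B' : Matrix n m R)
    (C' : Matrix m n R) (D' : Matrix m m R) :
    fromBlocks A B C D - fromBlocks A' B' C' D' =
      fromBlocks (A - A') (B - B') (C - C') (D - D') := by
  ext (i | i) (j | j) <;> rfl

theorem stack_add' {L n k : ℕ} (A B : Fin L → Matrix (Fin n) (Fin k) ℝ) :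
    stackMat A + stackMat B = stackMat (fun l => A l + B l) := by
  ext ⟨l, i⟩ j; simp [stackMat]

theorem stack_mul' {L n k p : ℕ} (A : Fin L → Matrix (Fin n) (Fin k) ℝ)
    (G : Matrix (Fin k) (Fin p) ℝ) :
    stackMat A * G = stackMat (fun l => A l * G) := by
  ext ⟨l, i⟩ j; simp [stackMat, Matrix.mul_apply]

theorem diag_kron_mul_stack' {L n k : ℕ} (d : Fin L → ℝ) (P : Matrix (Fin n) (Fin n) ℝ)
    (M : Fin L → Matrix (Fin n) (Fin k) ℝ) :
    ((Matrix.diagonal d) ⊗ₖ P) * stackMat M = stackMat (fun l => d l • (P * M l)) := by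
  ext ⟨l, i⟩ j
  simp [stackMat, Matrix.mul_apply, Fintype.sum_prod_type, Matrix.diagonal_apply,
    ite_mul, Finset.mul_sum, Matrix.smul_apply, Finset.sum_ite_eq, mul_assoc]

theorem stackT_mul_stack' {L n k p : ℕ} (M : Fin L → Matrix (Fin n) (Fin k) ℝ)
    (N : Fin L → Matrix (Fin n) (Fin p) ℝ) :
    (stackMat M)ᵀ * stackMat N = ∑ l, (M l)ᵀ * N l := by
  ext i j
  simp [stackMat, Matrix.mul_apply, Fintype.sum_prod_type, Finset.sum_apply,
    Matrix.sum_apply]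

theorem posDef_one_kron' {L n : ℕ} {P : Matrix (Fin n) (Fin n) ℝ} (hP : P.PosDef) :
    ((1 : Matrix (Fin L) (Fin L) ℝ) ⊗ₖ P).PosDef := by
  have hsymm : ∀ i j, P j i = P i j := fun i j => by
    conv_lhs => rw [← hP.1]
    simp
  refine PosDef.of_dotProduct_mulVec_pos ?_ fun x hx => ?_
  · ext ⟨l, i⟩ ⟨l', j⟩
    simp [Matrix.conjTranspose_apply, Matrix.one_apply, hsymm i j, eq_comm]
  · have expand : star x ⬝ᵥ ((1 : Matrix (Fin L) (Fin L) ℝ) ⊗ₖ P) *ᵥ x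
        = ∑ l : Fin L, star (fun i => x (l, i)) ⬝ᵥ P *ᵥ (fun i => x (l, i)) := by
      simp [dotProduct, Matrix.mulVec, Fintype.sum_prod_type, Matrix.one_apply,
        ite_mul, mul_ite, Finset.mul_sum, Finset.sum_ite_eq]
    rw [expand]
    obtain ⟨⟨l, i⟩, hli⟩ := Function.ne_iff.mp hx
    exact Finset.sum_pos' (fun l _ => hP.posSemidef.dotProduct_mulVec_nonneg _)
      ⟨l, Finset.mem_univ l, hP.dotProduct_mulVec_pos (fun h => hli (congrFun h i))⟩

set_option maxHeartbeats 2000000 in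
/-- Converse direction of the LMI characterization (Theorem 4 of the paper): if the
terminal-cost condition (11) holds with `F` and positive definite `P`, then the LMI (13)
is feasible with `G = Q̄ = P⁻¹` and `Y = FP⁻¹`; in particular `F = YG⁻¹`, `P = Q̄⁻¹`. -/
theorem stmt_16 (L n m M : ℕ) (hL : 1 ≤ L) (hn : 1 ≤ n) (hm : 1 ≤ m) (hM : 1 ≤ M)
    (A : Fin L → Matrix (Fin n) (Fin n) ℝ) (B : Fin L → Matrix (Fin n) (Fin m) ℝ)
    (Q : Matrix (Fin n) (Fin n) ℝ) (R : Matrix (Fin m) (Fin m) ℝ)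
    (hQ : Q.PosDef) (hR : R.PosDef)
    (q : Fin M → Fin L → ℝ) (hq : ∀ l, q l ∈ stdSimplex ℝ (Fin L))
    (F : Matrix (Fin m) (Fin n) ℝ)
    (P : Matrix (Fin n) (Fin n) ℝ) (hP : P.PosDef)
    (hneg : ∀ l : Fin M,
      (-((∑ j, q l j • ((A j + B j * F)ᵀ * P * (A j + B j * F)))
          - P + Fᵀ * R * F + Q)).PosDef) :
    (∀ l : Fin M, (bigLMI A B Q hQ R (q l) (F * P⁻¹) P⁻¹ P⁻¹).PosDef) ∧
    F = (F * P⁻¹) * (P⁻¹)⁻¹ ∧ P = (P⁻¹)⁻¹ := by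
  have hPd : IsUnit P.det := isUnit_iff_ne_zero.mpr hP.det_pos.ne'
  have hPi : (P⁻¹).PosDef := hP.inv
  have hPid : IsUnit (P⁻¹).det := isUnit_iff_ne_zero.mpr hPi.det_pos.ne'
  have hPiT : (P⁻¹)ᵀ = P⁻¹ := by
    rw [← Matrix.conjTranspose_eq_transpose_of_trivial]; exact hPi.1
  have hRd : IsUnit R.det := isUnit_iff_ne_zero.mpr hR.det_pos.ne'
  refine ⟨fun l => ?_, ?_, ?_⟩
  · -- main LMI
    set N : Fin L → Matrix (Fin n) (Fin n) ℝ := fun j => A j + B j * F with hN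
    set Mj : Fin L → Matrix (Fin n) (Fin n) ℝ := fun j => N j * P⁻¹ with hMj
    have hstack : stackMat A * P⁻¹ + stackMat B * (F * P⁻¹) = stackMat Mj := by
      rw [stack_mul', stack_mul', stack_add']
      congr 1; ext j
      simp [hMj, hN, Matrix.add_mul, Matrix.mul_assoc]
    set C1 : Matrix (Fin L × Fin n) (Fin n) ℝ :=
      -(sigmaHalf n (q l) * (stackMat A * P⁻¹ + stackMat B * (F * P⁻¹))) with hC1def
    set C2 : Matrix (Fin m) (Fin n) ℝ := -(F * P⁻¹) with hC2def
    set E : Matrix (Fin n) (Fin n) ℝ := -(CFC.sqrt Q * P⁻¹) with hEdef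
    set A₁ : Matrix ((Fin L × Fin n) ⊕ Fin m) ((Fin L × Fin n) ⊕ Fin m) ℝ :=
      fromBlocks ((1 : Matrix (Fin L) (Fin L) ℝ) ⊗ₖ P⁻¹) 0 0 R⁻¹ with hA₁def
    set B₁ : Matrix ((Fin L × Fin n) ⊕ Fin m) (Fin n ⊕ Fin n) ℝ :=
      fromBlocks 0 C1 0 C2 with hB₁def
    set D₁ : Matrix (Fin n ⊕ Fin n) (Fin n ⊕ Fin n) ℝ :=
      fromBlocks 1 E Eᴴ (-P⁻¹ + P⁻¹ + (P⁻¹)ᵀ) with hD₁def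
    have hbig : bigLMI A B Q hQ R (q l) (F * P⁻¹) P⁻¹ P⁻¹ = fromBlocks A₁ B₁ B₁ᴴ D₁ := by
      simp only [bigLMI, hA₁def, hB₁def, hD₁def,
        Matrix.conjTranspose_eq_transpose_of_trivial]
      rfl
    rw [hbig]
    have hA₁ : A₁.PosDef := by
      haveI := (posDef_one_kron' (L := L) hPi).isUnit.invertible
      have := posDef_fromBlocks'
        (A := (1 : Matrix (Fin L) (Fin L) ℝ) ⊗ₖ P⁻¹)
        (0 : Matrix (Fin L × Fin n) (Fin m) ℝ) R⁻¹ (posDef_one_kron' hPi)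
        (by simpa using hR.inv)
      simpa [hA₁def] using this
    haveI : Invertible A₁ := hA₁.isUnit.invertible
    have hA₁inv : A₁⁻¹ = fromBlocks ((1 : Matrix (Fin L) (Fin L) ℝ) ⊗ₖ P) 0 0 R := by
      apply Matrix.inv_eq_right_inv
      rw [hA₁def, fromBlocks_multiply]
      simp [← Matrix.mul_kronecker_mul, Matrix.nonsing_inv_mul _ hPd,
        Matrix.nonsing_inv_mul _ hRd, ← fromBlocks_one]
    apply posDef_fromBlocks' _ _ hA₁
    have hmid : B₁ᴴ * A₁⁻¹ * B₁ =
        fromBlocks 0 0 0 (C1ᴴ * ((1 : Matrix (Fin L) (Fin L) ℝ) ⊗ₖ P) * C1 + C2ᴴ * R * C2) := by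
      rw [hA₁inv, hB₁def, fromBlocks_conjTranspose, fromBlocks_multiply, fromBlocks_multiply]
      simp [Matrix.mul_assoc]
    rw [hmid, hD₁def, fromBlocks_sub']
    simp only [sub_zero]
    haveI : Invertible (1 : Matrix (Fin n) (Fin n) ℝ) := invertibleOne
    apply posDef_fromBlocks' _ _ Matrix.PosDef.one
    rw [inv_one]
    -- now the final Schur complement
    have hsigT : (sigmaHalf n (q l))ᵀ = sigmaHalf n (q l) := by
      simp [sigmaHalf, Matrix.diagonal_transpose]
    have hsig : sigmaHalf n (q l) =
        (Matrix.diagonal fun j => Real.sqrt (q l j)) ⊗ₖ (1 : Matrix (Fin n) (Fin n) ℝ) := by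
      rw [← Matrix.diagonal_one, Matrix.diagonal_kronecker_diagonal]
      simp [sigmaHalf]
    have hmidk : sigmaHalf n (q l) * ((1 : Matrix (Fin L) (Fin L) ℝ) ⊗ₖ P) *
        sigmaHalf n (q l) = (Matrix.diagonal (q l)) ⊗ₖ P := by
      have hdd : (Matrix.diagonal fun j => Real.sqrt (q l j)) * 1 *
          (Matrix.diagonal fun j => Real.sqrt (q l j)) = Matrix.diagonal (q l) := by
        rw [Matrix.mul_one, Matrix.diagonal_mul_diagonal]
        exact congrArg Matrix.diagonal (funext fun j => Real.mul_self_sqrt ((hq l).1 j))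
      rw [hsig, ← Matrix.mul_kronecker_mul, ← Matrix.mul_kronecker_mul, hdd,
        Matrix.one_mul, Matrix.mul_one]
    have hC1 : C1ᴴ * ((1 : Matrix (Fin L) (Fin L) ℝ) ⊗ₖ P) * C1 =
        P⁻¹ * (∑ j, q l j • ((N j)ᵀ * P * N j)) * P⁻¹ := by
      rw [hC1def, hstack]
      have lhs_eq : (-(sigmaHalf n (q l) * stackMat Mj))ᴴ *
          ((1 : Matrix (Fin L) (Fin L) ℝ) ⊗ₖ P) * (-(sigmaHalf n (q l) * stackMat Mj))
          = (stackMat Mj)ᵀ * (sigmaHalf n (q l) * ((1 : Matrix (Fin L) (Fin L) ℝ) ⊗ₖ P) *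
              sigmaHalf n (q l)) * stackMat Mj := by
        simp only [Matrix.conjTranspose_neg, Matrix.neg_mul, Matrix.mul_neg, neg_neg,
          Matrix.conjTranspose_mul, Matrix.conjTranspose_eq_transpose_of_trivial,
          Matrix.transpose_neg, Matrix.transpose_mul, neg_smul, one_smul, hsigT]
        simp only [Matrix.mul_assoc]
      rw [lhs_eq, hmidk, Matrix.mul_assoc, diag_kron_mul_stack', stackT_mul_stack',
        Finset.mul_sum, Finset.sum_mul]
      refine Finset.sum_congr rfl fun j _ => ?_
      simp only [hMj]
      rw [Matrix.transpose_mul, hPiT]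
      simp only [Matrix.mul_smul, Matrix.smul_mul]
      congr 1
      simp only [Matrix.mul_assoc]
    have hC2 : C2ᴴ * R * C2 = P⁻¹ * (Fᵀ * R * F) * P⁻¹ := by
      rw [hC2def]
      simp only [Matrix.conjTranspose_neg, Matrix.neg_mul, Matrix.mul_neg, neg_neg,
        Matrix.conjTranspose_mul, Matrix.conjTranspose_eq_transpose_of_trivial,
        Matrix.transpose_neg, Matrix.transpose_mul, hPiT]
      simp only [Matrix.mul_assoc]
    have hE : Eᴴ * E = P⁻¹ * Q * P⁻¹ := by
      rw [hEdef]
      simp only [Matrix.conjTranspose_neg, Matrix.neg_mul, Matrix.mul_neg, neg_neg,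
        Matrix.conjTranspose_mul, Matrix.conjTranspose_eq_transpose_of_trivial,
        Matrix.transpose_neg, Matrix.transpose_mul, hPiT]
      rw [← Matrix.conjTranspose_eq_transpose_of_trivial (CFC.sqrt Q),
        (CFC.sqrt_nonneg Q).posSemidef.1]
      calc P⁻¹ * CFC.sqrt Q * (CFC.sqrt Q * P⁻¹)
          = P⁻¹ * (CFC.sqrt Q * CFC.sqrt Q) * P⁻¹ := by simp only [Matrix.mul_assoc]
        _ = P⁻¹ * Q * P⁻¹ := by rw [CFC.sqrt_mul_sqrt_self Q hQ.posSemidef.nonneg]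
    have key : -P⁻¹ + P⁻¹ + (P⁻¹)ᵀ -
        (C1ᴴ * ((1 : Matrix (Fin L) (Fin L) ℝ) ⊗ₖ P) * C1 + C2ᴴ * R * C2) - Eᴴ * 1 * E =
        (P⁻¹)ᴴ * (-((∑ j, q l j • ((N j)ᵀ * P * N j))
          - P + Fᵀ * R * F + Q)) * P⁻¹ := by
      rw [hC1, hC2, Matrix.mul_one, hE, hPiT,
        Matrix.conjTranspose_eq_transpose_of_trivial, hPiT]
      have hPPP : P⁻¹ * P * P⁻¹ = P⁻¹ := by
        rw [Matrix.nonsing_inv_mul _ hPd, Matrix.one_mul]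
      simp only [Matrix.mul_add, Matrix.add_mul, Matrix.mul_sub, Matrix.sub_mul,
        Matrix.mul_neg, Matrix.neg_mul]
      rw [hPPP]
      abel
    rw [key]
    exact posDef_conj' (hneg l) P⁻¹ hPi.isUnit
  · rw [Matrix.mul_assoc, Matrix.mul_nonsing_inv _ hPid, Matrix.mul_one]
  · rw [Matrix.nonsing_inv_nonsing_inv _ hPd]
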